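/- Let f : [0,1] → [0,1] be continuous and strongly mixing. Then f is a topological K system: for every k ≥ 2, every tuple (U₁,…,U_k) of nonempty open subsets of [0,1] has an independence set of positive density; in fact there exists n ≥ 1 such that nℕ = {n, 2n, 3n, …} is an independence set for (U₁,…,U_k). -/

import Mathlib

open Filter Topology

/-- The unit interval `[0,1]` as a subtype of `ℝ`. -/
abbrev UI := Set.Icc (0 : ℝ) 1

/-- The ω-limit set of a point `x` under `f`: the set of limit points of the orbit. -/
def omegaSet (f : UI → UI) (x : UI) : Set UI :=
  {y | ∃ φ : ℕ → ℕ, StrictMono φ ∧ Tendsto (fun n => f^[φ n] x) atTop (𝓝 y)}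

/-- `p` is a periodic point of `f`. -/
def IsPerPt (f : UI → UI) (p : UI) : Prop := ∃ n ≥ 1, f^[n] p = p

/-- `J` is an independence set for the tuple of sets `U 0, ..., U (k-1)`. -/
def IsIndepTupleSet (f : UI → UI) {k : ℕ} (U : Fin k → Set UI) (J : Set ℕ) : Prop :=
  ∀ F : Finset ℕ, ↑F ⊆ J → ∀ s : ℕ → Fin k, ∃ z : UI, ∀ i ∈ F, f^[i] z ∈ U (s i)

/-- A set of natural numbers has positive (lower) density. -/
def HasPosDensity (J : Set ℕ) : Prop :=
  0 < liminf (fun N => (Nat.card ↥(J ∩ Set.Iio N) : ℝ) / N) atTop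

instance : Fact ((0:ℝ) ≤ 1) := ⟨zero_le_one⟩

/-- Every nonempty open subset of `[0,1]` contains a nondegenerate closed
subinterval with endpoints strictly inside `(0,1)`. -/
lemma interval_in_open (V : Set UI) (hV : IsOpen V) (hne : V.Nonempty) :
    ∃ a b : ℝ, 0 < a ∧ a < b ∧ b < 1 ∧ {x : UI | a ≤ x.1 ∧ x.1 ≤ b} ⊆ V := by
  obtain ⟨y, hy⟩ := hne
  obtain ⟨ε, hε, hball⟩ := Metric.mem_nhds_iff.1 (hV.mem_nhds hy)
  set ε' : ℝ := min (ε/2) (1/4) with hε'def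
  have hε'pos : 0 < ε' := by positivity
  have hε'le : ε' ≤ 1/4 := min_le_right _ _
  have hε'lt : ε' < ε := lt_of_le_of_lt (min_le_left _ _) (by linarith)
  set c : ℝ := max (min y.1 (1 - ε')) ε' with hcdef
  have hy0 : (0:ℝ) ≤ y.1 := y.2.1
  have hy1 : y.1 ≤ 1 := y.2.2
  have hc0 : ε' ≤ c := le_max_right _ _
  have hc1 : c ≤ 1 - ε' := by
    apply max_le _ (by linarith)
    exact le_trans (min_le_right _ _) (le_refl _)
  have hcy : |c - y.1| < ε := by
    rw [abs_sub_lt_iff]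
    constructor
    · have h1 : c ≤ max y.1 ε' := max_le_max (min_le_left _ _) (le_refl _)
      have h2 : max y.1 ε' ≤ y.1 + ε' := max_le (by linarith) (by linarith)
      linarith
    · have h3 : min y.1 (1 - ε') ≥ y.1 - ε' := le_min (by linarith) (by linarith)
      have h4 : c ≥ y.1 - ε' := le_trans h3 (le_max_left _ _)
      linarith
  have hcUI : c ∈ Set.Icc (0:ℝ) 1 := ⟨by linarith, by linarith⟩
  set x : UI := ⟨c, hcUI⟩ with hxdef
  have hxV : x ∈ V := by
    apply hball
    rw [Metric.mem_ball, Subtype.dist_eq, Real.dist_eq]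
    exact hcy
  obtain ⟨δ, hδ, hball2⟩ := Metric.mem_nhds_iff.1 (hV.mem_nhds hxV)
  set δ' : ℝ := min (δ/2) (ε'/2) with hδ'def
  have hδ'pos : 0 < δ' := by positivity
  refine ⟨c - δ', c + δ', ?_, by linarith, ?_, ?_⟩
  · have : δ' ≤ ε'/2 := min_le_right _ _
    linarith
  · have : δ' ≤ ε'/2 := min_le_right _ _
    linarith
  · intro z hz
    apply hball2
    rw [Metric.mem_ball, Subtype.dist_eq, Real.dist_eq, abs_sub_lt_iff]
    have : δ' ≤ δ/2 := min_le_left _ _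
    constructor <;> simp only [hxdef] <;> linarith [hz.1, hz.2]

/-- The itinerary lemma: if every interval `Jset i` covers every `Jset j`
under all iterates `f^[p]` with `p ≥ n`, then any finite pattern supported
on positive multiples of `n` can be realized. -/
lemma key_ind (f : UI → UI) {k : ℕ} (Jset : Fin k → Set UI) (n : ℕ)
    (hcov : ∀ p, n ≤ p → ∀ i j : Fin k, Jset j ⊆ f^[p] '' (Jset i))
    (hne : ∀ i, (Jset i).Nonempty) :
    ∀ (c : ℕ) (F : Finset ℕ), F.card = c → (∀ i ∈ F, ∃ j, 1 ≤ j ∧ i = n * j) →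
    ∀ s : ℕ → Fin k, ∀ t : Fin k, ∃ z ∈ Jset t, ∀ i ∈ F, f^[i] z ∈ Jset (s i) := by
  intro c
  induction c with
  | zero =>
    intro F hcard _ s t
    obtain ⟨z, hz⟩ := hne t
    rw [Finset.card_eq_zero] at hcard
    exact ⟨z, hz, by simp [hcard]⟩
  | succ c ih =>
    intro F hcard hmul s t
    have hFne : F.Nonempty := Finset.card_pos.1 (by omega)
    set a := F.min' hFne with hadef
    have haF : a ∈ F := F.min'_mem hFne
    obtain ⟨ja, hja1, hja⟩ := hmul a haF
    have han : n ≤ a := by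
      rw [hja]; exact Nat.le_mul_of_pos_right n (by omega)
    have hlt : ∀ i ∈ F.erase a, a < i := by
      intro i hi
      exact lt_of_le_of_ne (F.min'_le i (Finset.mem_of_mem_erase hi))
        (Ne.symm (Finset.ne_of_mem_erase hi))
    set F' := (F.erase a).image (· - a) with hF'def
    have hinj : Set.InjOn (· - a) ↑(F.erase a) := by
      intro i hi i' hi' hii'
      have h1 := hlt i (Finset.mem_coe.1 hi); have h2 := hlt i' (Finset.mem_coe.1 hi')
      simp only at hii'
      omega
    have hcard' : F'.card = c := by
      rw [hF'def, Finset.card_image_of_injOn hinj, Finset.card_erase_of_mem haF, hcard]; omega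
    have hmul' : ∀ i' ∈ F', ∃ j, 1 ≤ j ∧ i' = n * j := by
      intro i' hi'
      obtain ⟨i, hi, rfl⟩ := Finset.mem_image.1 hi'
      obtain ⟨j, hj1, hj⟩ := hmul i (Finset.mem_of_mem_erase hi)
      have hai : a < i := hlt i hi
      have hjaj : ja < j := by
        by_contra h
        push_neg at h
        have : i ≤ a := by rw [hja, hj]; exact Nat.mul_le_mul_left n h
        omega
      refine ⟨j - ja, by omega, ?_⟩
      have : n * ja + n * (j - ja) = n * j := by
        rw [← Nat.mul_add]; congr 1; omega
      omega
    obtain ⟨z₁, hz₁, h₁⟩ := ih F' hcard' hmul' (fun m => s (m + a)) (s a)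
    obtain ⟨z, hz, hfz⟩ := hcov a han t (s a) hz₁
    refine ⟨z, hz, ?_⟩
    intro i hi
    by_cases hia : i = a
    · subst hia; rw [hfz]; exact hz₁
    · have hiF' : i - a ∈ F' := Finset.mem_image.2 ⟨i, Finset.mem_erase.2 ⟨hia, hi⟩, rfl⟩
      have := h₁ (i - a) hiF'
      have hile : a ≤ i := F.min'_le i hi
      rw [Nat.sub_add_cancel hile] at this
      have key : f^[(i - a) + a] z ∈ Jset (s i) := by
        rw [Function.iterate_add_apply, hfz]; exact this
      rwa [Nat.sub_add_cancel hile] at key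

/-- The set of positive multiples of `n` has positive lower density. -/
lemma posdensity_multiples (n : ℕ) (hn : 1 ≤ n) :
    HasPosDensity {m : ℕ | ∃ j : ℕ, 1 ≤ j ∧ m = n * j} := by
  set J : Set ℕ := {m : ℕ | ∃ j : ℕ, 1 ≤ j ∧ m = n * j} with hJdef
  set u : ℕ → ℝ := fun N => (Nat.card ↥(J ∩ Set.Iio N) : ℝ) / N with hudef
  have key : ∀ N, 2 * n ≤ N → 1 / (2 * n : ℝ) ≤ u N := by
    intro N hN
    obtain ⟨m, hm⟩ : ∃ m, m = (N - 1) / n := ⟨_, rfl⟩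
    have hq : n * m + (N - 1) % n = N - 1 := by rw [hm]; exact Nat.div_add_mod _ _
    have hr : (N - 1) % n < n := Nat.mod_lt _ (by omega)
    have hnm : 2 * (n * m) ≥ N := by omega
    have hsub : ↑((Finset.Icc 1 m).image (fun j => n * j)) ⊆ J ∩ Set.Iio N := by
      intro x hx
      simp only [Finset.coe_image, Set.mem_image, Finset.mem_coe, Finset.mem_Icc] at hx
      obtain ⟨j, ⟨hj1, hjm⟩, rfl⟩ := hx
      refine ⟨⟨j, hj1, rfl⟩, ?_⟩
      have h2 : n * j ≤ n * m := Nat.mul_le_mul_left n hjm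
      simp only [Set.mem_Iio]
      omega
    have hfin : (J ∩ Set.Iio N).Finite := (Set.finite_Iio N).subset Set.inter_subset_right
    have hcard : m ≤ Nat.card ↥(J ∩ Set.Iio N) := by
      have h1 : ((Finset.Icc 1 m).image (fun j => n * j)).card = m := by
        rw [Finset.card_image_of_injective _ (mul_right_injective₀ (by omega : n ≠ 0)),
          Nat.card_Icc]
        omega
      calc m = (((Finset.Icc 1 m).image (fun j => n * j) : Finset ℕ) : Set ℕ).ncard := by
              rw [Set.ncard_coe_finset, h1]
        _ ≤ (J ∩ Set.Iio N).ncard := Set.ncard_le_ncard hsub hfin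
        _ = Nat.card ↥(J ∩ Set.Iio N) := (Nat.card_coe_set_eq _).symm
    have hNpos : (0:ℝ) < N := by exact_mod_cast (by omega : 0 < N)
    have hmN : (1:ℝ) / (2*n) ≤ (m:ℝ) / N := by
      rw [div_le_div_iff₀ (by positivity) hNpos]
      have h3 : (N:ℝ) ≤ 2 * ((n:ℝ) * m) := by exact_mod_cast hnm
      nlinarith
    refine le_trans hmN ?_
    have : (m:ℝ) ≤ (Nat.card ↥(J ∩ Set.Iio N) : ℝ) := by exact_mod_cast hcard
    show (m:ℝ)/N ≤ (Nat.card ↥(J ∩ Set.Iio N) : ℝ)/N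
    gcongr
  have hub : ∀ N, u N ≤ 1 := by
    intro N
    rcases Nat.eq_zero_or_pos N with h0 | hpos
    · simp [hudef, h0]
    · have : Nat.card ↥(J ∩ Set.Iio N) ≤ N := by
        calc Nat.card ↥(J ∩ Set.Iio N) = (J ∩ Set.Iio N).ncard := Nat.card_coe_set_eq _
          _ ≤ (Set.Iio N).ncard := Set.ncard_le_ncard Set.inter_subset_right
              (by rw [← Finset.coe_Iio]; exact (Finset.Iio N).finite_toSet)
          _ = N := by rw [← Finset.coe_Iio, Set.ncard_coe_finset, Nat.card_Iio]
      have hc : (Nat.card ↥(J ∩ Set.Iio N) : ℝ) ≤ N := by exact_mod_cast this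
      rw [hudef]
      apply div_le_one_of_le₀ hc (by positivity)
  have hcb : IsCoboundedUnder (· ≥ ·) atTop u :=
    isCoboundedUnder_ge_of_le atTop hub
  have hlim : 1 / (2 * n : ℝ) ≤ liminf u atTop := by
    apply le_liminf_of_le hcb
    filter_upwards [eventually_ge_atTop (2 * n)] with N hN using key N hN
  calc (0:ℝ) < 1 / (2*n) := by positivity
    _ ≤ liminf u atTop := hlim

theorem stmt_15 (f : UI → UI) (hf : Continuous f)
    (hmix : ∀ U V : Set UI, IsOpen U → IsOpen V → U.Nonempty → V.Nonempty →
      ∃ N : ℕ, ∀ n ≥ N, (f^[n] '' U ∩ V).Nonempty) :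
    ∀ (k : ℕ), 2 ≤ k → ∀ U : Fin k → Set UI, (∀ i, IsOpen (U i)) →
      (∀ i, (U i).Nonempty) →
      (∃ J : Set ℕ, HasPosDensity J ∧ IsIndepTupleSet f U J) ∧
      ∃ n : ℕ, 1 ≤ n ∧ IsIndepTupleSet f U {m : ℕ | ∃ j : ℕ, 1 ≤ j ∧ m = n * j} := by
  intro k hk U hopen hUne
  have : Nonempty (Fin k) := ⟨⟨0, by omega⟩⟩
  choose a b ha hab hb1 hsub using fun i => interval_in_open (U i) (hopen i) (hUne i)
  -- endpoints as elements of UI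
  have haUI : ∀ i, a i ∈ Set.Icc (0:ℝ) 1 :=
    fun i => ⟨le_of_lt (ha i), by linarith [hab i, hb1 i]⟩
  have hbUI : ∀ i, b i ∈ Set.Icc (0:ℝ) 1 :=
    fun i => ⟨by linarith [ha i, hab i], le_of_lt (hb1 i)⟩
  set lo : Fin k → UI := fun i => ⟨a i, haUI i⟩ with hlodef
  set hi : Fin k → UI := fun i => ⟨b i, hbUI i⟩ with hhidef
  set Jset : Fin k → Set UI := fun i => Set.Icc (lo i) (hi i) with hJsetdef
  have hJU : ∀ i, Jset i ⊆ U i := by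
    intro i x hx
    exact hsub i ⟨hx.1, hx.2⟩
  have hJne : ∀ i, (Jset i).Nonempty :=
    fun i => ⟨lo i, le_refl _, le_of_lt (by exact_mod_cast hab i : lo i < hi i)⟩
  -- global bounds
  set α : ℝ := Finset.univ.inf' Finset.univ_nonempty a with hαdef
  set β : ℝ := Finset.univ.sup' Finset.univ_nonempty b with hβdef
  have hα : 0 < α := (Finset.lt_inf'_iff _).2 fun i _ => ha i
  have hβ : β < 1 := (Finset.sup'_lt_iff _).2 fun i _ => hb1 i
  have hαa : ∀ i, α ≤ a i := fun i => Finset.inf'_le _ (Finset.mem_univ i)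
  have hbβ : ∀ i, b i ≤ β := fun i => Finset.le_sup' _ (Finset.mem_univ i)
  -- low and high open sets
  set L : Set UI := {x | x.1 < α} with hLdef
  set Hi : Set UI := {x | β < x.1} with hHdef
  have hLopen : IsOpen L := isOpen_lt continuous_subtype_val continuous_const
  have hHopen : IsOpen Hi := isOpen_lt continuous_const continuous_subtype_val
  have hLne : L.Nonempty := ⟨⟨0, le_refl _, zero_le_one⟩, hα⟩
  have hHne : Hi.Nonempty := ⟨⟨1, zero_le_one, le_refl _⟩, hβ⟩
  -- open cores of the intervals
  set O : Fin k → Set UI := fun i => {x | a i < x.1 ∧ x.1 < b i} with hOdef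
  have hOopen : ∀ i, IsOpen (O i) := fun i =>
    (isOpen_lt continuous_const continuous_subtype_val).inter
      (isOpen_lt continuous_subtype_val continuous_const)
  have hOne : ∀ i, (O i).Nonempty := by
    intro i
    refine ⟨⟨(a i + b i)/2, ⟨by linarith [ha i, hab i], by linarith [hab i, hb1 i]⟩⟩, ?_, ?_⟩
    · show a i < (a i + b i)/2; linarith [hab i]
    · show (a i + b i)/2 < b i; linarith [hab i]
  have hOJ : ∀ i, O i ⊆ Jset i := by
    intro i x hx
    exact ⟨le_of_lt hx.1, le_of_lt hx.2⟩
  -- mixing constants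
  choose N1 hN1 using fun i => hmix (O i) L (hOopen i) hLopen (hOne i) hLne
  choose N2 hN2 using fun i => hmix (O i) Hi (hOopen i) hHopen (hOne i) hHne
  set n : ℕ := max 1 (Finset.univ.sup fun i => max (N1 i) (N2 i)) with hndef
  have hn1 : 1 ≤ n := le_max_left _ _
  have hsupn : (Finset.univ.sup fun i => max (N1 i) (N2 i)) ≤ n := le_max_right _ _
  have hnN1 : ∀ i, N1 i ≤ n := by
    intro i
    have h := Finset.le_sup (f := fun i => max (N1 i) (N2 i)) (Finset.mem_univ i)
    exact le_trans (le_trans (le_max_left _ _) h) hsupn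
  have hnN2 : ∀ i, N2 i ≤ n := by
    intro i
    have h := Finset.le_sup (f := fun i => max (N1 i) (N2 i)) (Finset.mem_univ i)
    exact le_trans (le_trans (le_max_right _ _) h) hsupn
  -- covering property
  have hcov : ∀ p, n ≤ p → ∀ i j : Fin k, Jset j ⊆ f^[p] '' (Jset i) := by
    intro p hp i j
    obtain ⟨u, huim, huL⟩ := hN1 i p (le_trans (hnN1 i) hp)
    obtain ⟨v, hvim, hvH⟩ := hN2 i p (le_trans (hnN2 i) hp)
    have huJ : u ∈ f^[p] '' Jset i := Set.image_mono (hOJ i) huim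
    have hvJ : v ∈ f^[p] '' Jset i := Set.image_mono (hOJ i) hvim
    have hpc : IsPreconnected (f^[p] '' Jset i) :=
      (isPreconnected_Icc).image _ ((hf.iterate p)).continuousOn
    intro y hy
    refine hpc.ordConnected.out huJ hvJ ⟨?_, ?_⟩
    · show u ≤ y
      have h1 : (u : ℝ) < α := huL
      have h2 : a j ≤ (y : ℝ) := hy.1
      exact Subtype.coe_le_coe.1 (by linarith [hαa j])
    · show y ≤ v
      have h1 : β < (v : ℝ) := hvH
      have h2 : (y : ℝ) ≤ b j := hy.2
      exact Subtype.coe_le_coe.1 (by linarith [hbβ j])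
  -- the independence set
  have hindep : IsIndepTupleSet f U {m : ℕ | ∃ j : ℕ, 1 ≤ j ∧ m = n * j} := by
    intro F hF s
    obtain ⟨z, _, hall⟩ :=
      key_ind f Jset n hcov hJne F.card F rfl (fun i hi => hF hi) s ⟨0, by omega⟩
    exact ⟨z, fun i hi => hJU (s i) (hall i hi)⟩
  refine ⟨⟨_, posdensity_multiples n hn1, hindep⟩, n, hn1, hindep⟩
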